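/- Let G be obtained from finite simple graphs G_l and G_r (on disjoint vertex sets, with nonempty designated twin sets TS(G_l) and TS(G_r)) by the true twin operation G = G_l ⊗ G_r or by the attachment operation G = G_l ⊕ G_r, and assume G admits a paired-dominating set. If no minimum paired-dominating set of G belongs to D_0(G) (i.e. D_p(G) ∩ D_0(G) = ∅), then γ_p(G) = γ_0(G) + 2; otherwise γ_p(G) = γ_0(G). -/
import Mathlib


/-- A finite simple graph on a subset of an ambient vertex type `α`,
together with a designated twin set `TS ⊆ verts`. -/
structure TSGraph (α : Type*) where
  verts : Finset α
  Adj : α → α → Prop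
  symm : ∀ u v, Adj u v → Adj v u
  irrefl : ∀ u, ¬ Adj u u
  adj_mem : ∀ u v, Adj u v → u ∈ verts ∧ v ∈ verts
  TS : Finset α
  TS_sub : TS ⊆ verts

namespace TSGraph

variable {α : Type*} [DecidableEq α]

/-- `f` encodes a perfect matching of the subgraph of `G` induced by `S`:
every vertex of `S` is paired with an adjacent vertex of `S`, involutively. -/
def IsPM (G : TSGraph α) (S : Finset α) (f : α → α) : Prop :=
  ∀ v ∈ S, f v ∈ S ∧ G.Adj v (f v) ∧ f (f v) = v

/-- `S ⊆ V(G)` dominates `V(G) − TS(G)` and, for some `X ⊆ S ∩ TS(G)` of size `k`,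
the subgraph induced by `S − X` has a perfect matching. -/
def Adm (G : TSGraph α) (k : ℕ) (S : Finset α) : Prop :=
  S ⊆ G.verts ∧
  (∀ v ∈ G.verts, v ∉ G.TS → v ∈ S ∨ ∃ u ∈ S, G.Adj u v) ∧
  ∃ X ⊆ S ∩ G.TS, X.card = k ∧ ∃ f, G.IsPM (S \ X) f

/-- Membership in the family `D_k(G)`: admissible of minimum cardinality. -/
def memD (G : TSGraph α) (k : ℕ) (S : Finset α) : Prop :=
  G.Adm k S ∧ ∀ S', G.Adm k S' → S.card ≤ S'.card

/-- `D_k(G) ≠ ∅`. -/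
def DkNonempty (G : TSGraph α) (k : ℕ) : Prop := ∃ S, G.memD k S

/-- `D_k(G) ≠ ∅` for all `0 ≤ k ≤ |TS(G)|`. -/
def AllDkNonempty (G : TSGraph α) : Prop := ∀ k ≤ G.TS.card, G.DkNonempty k

/-- `γ_k(G)`: the common cardinality of the members of `D_k(G)`. -/
noncomputable def gamma (G : TSGraph α) (k : ℕ) : ℕ :=
  sInf {n | ∃ S, G.Adm k S ∧ S.card = n}

/-- A paired-dominating set of `G`. -/
def IsPDS (G : TSGraph α) (D : Finset α) : Prop :=
  D ⊆ G.verts ∧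
  (∀ v ∈ G.verts, v ∈ D ∨ ∃ u ∈ D, G.Adj u v) ∧
  ∃ f, G.IsPM D f

/-- `γ_p(G)`: the paired-domination number. -/
noncomputable def gammaP (G : TSGraph α) : ℕ :=
  sInf {n | ∃ D, G.IsPDS D ∧ D.card = n}

/-- Membership in `D_p(G)`: minimum-cardinality paired-dominating sets. -/
def memDp (G : TSGraph α) (D : Finset α) : Prop :=
  G.IsPDS D ∧ D.card = G.gammaP

/-- `min(G) = min { γ_k(G) : 0 ≤ k ≤ |TS(G)| }`. -/
noncomputable def minVal (G : TSGraph α) : ℕ :=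
  sInf {n | ∃ k ≤ G.TS.card, G.gamma k = n}

/-- `α(G)`: the smallest `k` with `γ_k(G) = min(G)`. -/
noncomputable def alphaVal (G : TSGraph α) : ℕ :=
  sInf {k | k ≤ G.TS.card ∧ G.gamma k = G.minVal}

/-- `β(G)`: the largest `k` with `γ_k(G) = min(G)`. -/
noncomputable def betaVal (G : TSGraph α) : ℕ :=
  sSup {k | k ≤ G.TS.card ∧ G.gamma k = G.minVal}

/-- Membership in `Ψ(G)`: sets in some `D_k(G)` of cardinality `min(G)`. -/
def memPsi (G : TSGraph α) (D : Finset α) : Prop :=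
  (∃ k, k ≤ G.TS.card ∧ G.memD k D) ∧ D.card = G.minVal

/-- Equation (2) holds for `G`. -/
def Eq2Holds (G : TSGraph α) : Prop :=
  ∀ k ≤ G.TS.card,
    (k ≤ G.alphaVal → G.gamma k = G.minVal + G.alphaVal - k) ∧
    (G.betaVal ≤ k → G.gamma k = G.minVal + k - G.betaVal) ∧
    (G.alphaVal < k → k < G.betaVal → Even (k - G.alphaVal) → G.gamma k = G.minVal) ∧
    (G.alphaVal < k → k < G.betaVal → ¬ Even (k - G.alphaVal) → G.gamma k = G.minVal + 1)

/-- `G = Gl ⊗ Gr` (true twin composition). -/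
def IsTrueTwin (G Gl Gr : TSGraph α) : Prop :=
  Disjoint Gl.verts Gr.verts ∧
  G.verts = Gl.verts ∪ Gr.verts ∧
  (∀ u v, G.Adj u v ↔ Gl.Adj u v ∨ Gr.Adj u v ∨
    (u ∈ Gl.TS ∧ v ∈ Gr.TS) ∨ (u ∈ Gr.TS ∧ v ∈ Gl.TS)) ∧
  G.TS = Gl.TS ∪ Gr.TS

/-- `G = Gl ⊙ Gr` (false twin composition). -/
def IsFalseTwin (G Gl Gr : TSGraph α) : Prop :=
  Disjoint Gl.verts Gr.verts ∧
  G.verts = Gl.verts ∪ Gr.verts ∧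
  (∀ u v, G.Adj u v ↔ Gl.Adj u v ∨ Gr.Adj u v) ∧
  G.TS = Gl.TS ∪ Gr.TS

/-- `G = Gl ⊕ Gr` (attachment composition). -/
def IsAttach (G Gl Gr : TSGraph α) : Prop :=
  Disjoint Gl.verts Gr.verts ∧
  G.verts = Gl.verts ∪ Gr.verts ∧
  (∀ u v, G.Adj u v ↔ Gl.Adj u v ∨ Gr.Adj u v ∨
    (u ∈ Gl.TS ∧ v ∈ Gr.TS) ∨ (u ∈ Gr.TS ∧ v ∈ Gl.TS)) ∧
  G.TS = Gl.TS

/-- The twin-set graph `G` arises from a decomposition tree all of whose associated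
twin-set graphs satisfy the property `P`. -/
inductive FromDecompTree (P : TSGraph α → Prop) : TSGraph α → Prop where
  | single (G : TSGraph α) (v : α) (hv : G.verts = {v}) (hts : G.TS = {v})
      (hadj : ∀ u w, ¬ G.Adj u w) (hP : P G) : FromDecompTree P G
  | ttwin (G Gl Gr : TSGraph α) (hl : FromDecompTree P Gl) (hr : FromDecompTree P Gr)
      (h : IsTrueTwin G Gl Gr) (hP : P G) : FromDecompTree P G
  | ftwin (G Gl Gr : TSGraph α) (hl : FromDecompTree P Gl) (hr : FromDecompTree P Gr)
      (h : IsFalseTwin G Gl Gr) (hP : P G) : FromDecompTree P G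
  | attach (G Gl Gr : TSGraph α) (hl : FromDecompTree P Gl) (hr : FromDecompTree P Gr)
      (h : IsAttach G Gl Gr) (hP : P G) : FromDecompTree P G

end TSGraph

namespace TSGraph

variable {α : Type*} [DecidableEq α]

lemma pm_even (G : TSGraph α) (f : α → α) :
    ∀ S : Finset α, G.IsPM S f → Even S.card := by
  intro S
  induction S using Finset.strongInduction with
  | _ S ih =>
    intro h
    rcases S.eq_empty_or_nonempty with rfl | ⟨v, hv⟩
    · simp
    · obtain ⟨hfv, hadj, hff⟩ := h v hv
      have hne : f v ≠ v := fun he => G.irrefl v (by rw [he] at hadj; exact hadj)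
      have hpairsub : ({v, f v} : Finset α) ⊆ S := by
        intro x hx
        simp only [Finset.mem_insert, Finset.mem_singleton] at hx
        rcases hx with rfl | rfl
        · exact hv
        · exact hfv
      have hTsub : S \ {v, f v} ⊂ S :=
        Finset.sdiff_ssubset hpairsub ⟨v, by simp⟩
      have hpm : G.IsPM (S \ {v, f v}) f := by
        intro w hw
        have hwS := (Finset.mem_sdiff.mp hw).1
        have hwne := (Finset.mem_sdiff.mp hw).2
        simp only [Finset.mem_insert, Finset.mem_singleton, not_or] at hwne
        obtain ⟨hfwS, hadjw, hffw⟩ := h w hwS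
        refine ⟨Finset.mem_sdiff.mpr ⟨hfwS, ?_⟩, hadjw, hffw⟩
        simp only [Finset.mem_insert, Finset.mem_singleton, not_or]
        constructor
        · intro he
          exact hwne.2 (by rw [← hffw, he])
        · intro he
          exact hwne.1 (by rw [← hffw, he, hff])
      have hcard2 : ({v, f v} : Finset α).card = 2 := Finset.card_pair (Ne.symm hne)
      have hc : (S \ {v, f v}).card = S.card - 2 := by
        rw [Finset.card_sdiff_of_subset hpairsub, hcard2]
      have h2le : 2 ≤ S.card := hcard2 ▸ Finset.card_le_card hpairsub
      obtain ⟨m, hm⟩ := ih _ hTsub hpm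
      exact ⟨m + 1, by omega⟩

lemma pds_adm (G : TSGraph α) (D : Finset α) (h : G.IsPDS D) : G.Adm 0 D := by
  obtain ⟨h1, h2, f, hf⟩ := h
  exact ⟨h1, fun v hv _ => h2 v hv, ∅, Finset.empty_subset _, Finset.card_empty,
    f, by simpa [Finset.sdiff_empty] using hf⟩

lemma adm_zero_even (G : TSGraph α) (S : Finset α) (h : G.Adm 0 S) : Even S.card := by
  obtain ⟨_, _, X, _, hX0, f, hf⟩ := h
  rw [Finset.card_eq_zero] at hX0
  subst hX0
  rw [Finset.sdiff_empty] at hf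
  exact G.pm_even f S hf

lemma construct_pds (G Gl Gr : TSGraph α)
    (hdisj : Disjoint Gl.verts Gr.verts)
    (hverts : G.verts = Gl.verts ∪ Gr.verts)
    (hadj : ∀ u v, G.Adj u v ↔ Gl.Adj u v ∨ Gr.Adj u v ∨
      (u ∈ Gl.TS ∧ v ∈ Gr.TS) ∨ (u ∈ Gr.TS ∧ v ∈ Gl.TS))
    (hTSsub : G.TS ⊆ Gl.TS ∪ Gr.TS)
    (htsl : Gl.TS.Nonempty) (htsr : Gr.TS.Nonempty)
    (S : Finset α) (hS : G.Adm 0 S) :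
    ∃ D, G.IsPDS D ∧ D.card ≤ S.card + 2 := by
  obtain ⟨hsub, hdom, X, _, hX0, f, hf⟩ := hS
  rw [Finset.card_eq_zero] at hX0
  subst hX0
  rw [Finset.sdiff_empty] at hf
  by_cases hA : Gl.TS ⊆ S
  · -- S itself is a PDS
    refine ⟨S, ⟨hsub, ?_, f, hf⟩, by omega⟩
    intro v hv
    by_cases hvt : v ∈ G.TS
    · rcases Finset.mem_union.mp (hTSsub hvt) with hvl | hvr
      · exact Or.inl (hA hvl)
      · obtain ⟨a, ha⟩ := htsl
        exact Or.inr ⟨a, hA ha, (hadj a v).mpr (Or.inr (Or.inr (Or.inl ⟨ha, hvr⟩)))⟩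
    · exact hdom v hv hvt
  · by_cases hB : Gr.TS ⊆ S
    · refine ⟨S, ⟨hsub, ?_, f, hf⟩, by omega⟩
      intro v hv
      by_cases hvt : v ∈ G.TS
      · rcases Finset.mem_union.mp (hTSsub hvt) with hvl | hvr
        · obtain ⟨b, hb⟩ := htsr
          exact Or.inr ⟨b, hB hb, (hadj b v).mpr (Or.inr (Or.inr (Or.inr ⟨hb, hvl⟩)))⟩
        · exact Or.inl (hB hvr)
      · exact hdom v hv hvt
    · obtain ⟨a, hal, haS⟩ : ∃ a ∈ Gl.TS, a ∉ S := by
        by_contra hcon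
        push_neg at hcon
        exact hA fun x hx => hcon x hx
      obtain ⟨b, hbr, hbS⟩ : ∃ b ∈ Gr.TS, b ∉ S := by
        by_contra hcon
        push_neg at hcon
        exact hB fun x hx => hcon x hx
      have hab : a ≠ b := by
        intro he
        exact (Finset.disjoint_left.mp hdisj (Gl.TS_sub hal)) (he ▸ Gr.TS_sub hbr)
      refine ⟨insert a (insert b S), ⟨?_, ?_, ?_⟩, ?_⟩
      · intro x hx
        rcases Finset.mem_insert.mp hx with rfl | hx
        · exact hverts ▸ Finset.mem_union_left _ (Gl.TS_sub hal)
        rcases Finset.mem_insert.mp hx with rfl | hx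
        · exact hverts ▸ Finset.mem_union_right _ (Gr.TS_sub hbr)
        · exact hsub hx
      · intro v hv
        by_cases hvt : v ∈ G.TS
        · rcases Finset.mem_union.mp (hTSsub hvt) with hvl | hvr
          · exact Or.inr ⟨b, by simp, (hadj b v).mpr (Or.inr (Or.inr (Or.inr ⟨hbr, hvl⟩)))⟩
          · exact Or.inr ⟨a, by simp, (hadj a v).mpr (Or.inr (Or.inr (Or.inl ⟨hal, hvr⟩)))⟩
        · rcases hdom v hv hvt with hvS | ⟨u, huS, hu⟩
          · exact Or.inl (by simp [hvS])
          · exact Or.inr ⟨u, by simp [huS], hu⟩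
      · have hAdjab : G.Adj a b := (hadj a b).mpr (Or.inr (Or.inr (Or.inl ⟨hal, hbr⟩)))
        set g : α → α := fun x => if x = a then b else if x = b then a else f x with hg
        have hga : g a = b := by simp [hg]
        have hgb : g b = a := by simp [hg, Ne.symm hab]
        have hgS : ∀ w ∈ S, g w = f w := by
          intro w hw
          have hwa : w ≠ a := fun he => haS (he ▸ hw)
          have hwb : w ≠ b := fun he => hbS (he ▸ hw)
          simp [hg, hwa, hwb]
        refine ⟨g, ?_⟩
        intro v hv
        rcases Finset.mem_insert.mp hv with rfl | hv
        · refine ⟨?_, ?_, ?_⟩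
          · rw [hga]; simp
          · rw [hga]; exact hAdjab
          · rw [hga, hgb]
        rcases Finset.mem_insert.mp hv with rfl | hv
        · refine ⟨?_, ?_, ?_⟩
          · rw [hgb]; simp
          · rw [hgb]; exact G.symm _ _ hAdjab
          · rw [hgb, hga]
        · obtain ⟨hfvS, hadjv, hffv⟩ := hf v hv
          have h1 := hgS v hv
          have h2 := hgS (f v) hfvS
          refine ⟨?_, ?_, ?_⟩
          · rw [h1]; simp [hfvS]
          · rw [h1]; exact hadjv
          · rw [h1, h2, hffv]
      · calc (insert a (insert b S)).card ≤ (insert b S).card + 1 :=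
              Finset.card_insert_le _ _
          _ ≤ S.card + 1 + 1 := by
              have := Finset.card_insert_le b S; omega
          _ = S.card + 2 := by omega

end TSGraph

open TSGraph in
/-- For `G = Gl ⊗ Gr` or `G = Gl ⊕ Gr` with nonempty twin sets and
`G` admitting a paired-dominating set: if `D_p(G) ∩ D_0(G) = ∅` then
`γ_p(G) = γ_0(G) + 2`, otherwise `γ_p(G) = γ_0(G)`. -/
theorem stmt1 {α : Type*} [DecidableEq α] (G Gl Gr : TSGraph α)
    (hcomp : IsTrueTwin G Gl Gr ∨ IsAttach G Gl Gr)
    (htsl : Gl.TS.Nonempty) (htsr : Gr.TS.Nonempty)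
    (hpds : ∃ D, G.IsPDS D) :
    ((¬ ∃ D, G.memDp D ∧ G.memD 0 D) → G.gammaP = G.gamma 0 + 2) ∧
    ((∃ D, G.memDp D ∧ G.memD 0 D) → G.gammaP = G.gamma 0) := by
  -- extract the shared structure of the two compositions
  obtain ⟨hdisj, hverts, hadj, hTSsub⟩ :
      Disjoint Gl.verts Gr.verts ∧ G.verts = Gl.verts ∪ Gr.verts ∧
      (∀ u v, G.Adj u v ↔ Gl.Adj u v ∨ Gr.Adj u v ∨
        (u ∈ Gl.TS ∧ v ∈ Gr.TS) ∨ (u ∈ Gr.TS ∧ v ∈ Gl.TS)) ∧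
      G.TS ⊆ Gl.TS ∪ Gr.TS := by
    rcases hcomp with ⟨h1, h2, h3, h4⟩ | ⟨h1, h2, h3, h4⟩
    · exact ⟨h1, h2, h3, h4 ▸ le_refl _⟩
    · exact ⟨h1, h2, h3, h4 ▸ Finset.subset_union_left⟩
  obtain ⟨D0, hD0⟩ := hpds
  have hPne : {n | ∃ D, G.IsPDS D ∧ D.card = n}.Nonempty := ⟨D0.card, D0, hD0, rfl⟩
  have h0ne : {n | ∃ S, G.Adm 0 S ∧ S.card = n}.Nonempty :=
    ⟨D0.card, D0, pds_adm G D0 hD0, rfl⟩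
  obtain ⟨Dp, hDpPDS, hDpcard⟩ : ∃ D, G.IsPDS D ∧ D.card = G.gammaP :=
    Nat.sInf_mem hPne
  obtain ⟨S0, hS0adm, hS0card⟩ : ∃ S, G.Adm 0 S ∧ S.card = G.gamma 0 :=
    Nat.sInf_mem h0ne
  have h1 : G.gamma 0 ≤ G.gammaP := by
    have : G.gamma 0 ≤ Dp.card := Nat.sInf_le ⟨Dp, pds_adm G Dp hDpPDS, rfl⟩
    omega
  have h2 : G.gammaP ≤ G.gamma 0 + 2 := by
    obtain ⟨D, hD, hDcard⟩ :=
      construct_pds G Gl Gr hdisj hverts hadj hTSsub htsl htsr S0 hS0adm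
    have : G.gammaP ≤ D.card := Nat.sInf_le ⟨D, hD, rfl⟩
    omega
  have hevP : Even G.gammaP := by
    obtain ⟨_, _, f, hf⟩ := hDpPDS
    exact hDpcard ▸ G.pm_even f Dp hf
  have hev0 : Even (G.gamma 0) := hS0card ▸ adm_zero_even G S0 hS0adm
  constructor
  · intro hno
    have hne : G.gammaP ≠ G.gamma 0 := by
      intro heq
      apply hno
      refine ⟨Dp, ⟨hDpPDS, hDpcard⟩, pds_adm G Dp hDpPDS, ?_⟩
      intro S' hS'
      have : G.gamma 0 ≤ S'.card := Nat.sInf_le ⟨S', hS', rfl⟩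
      omega
    obtain ⟨m, hm⟩ := hevP
    obtain ⟨n, hn⟩ := hev0
    omega
  · rintro ⟨D, ⟨hDpds, hDcard⟩, hDadm, hDmin⟩
    have hle : D.card ≤ S0.card := hDmin S0 hS0adm
    have hge : G.gamma 0 ≤ D.card := Nat.sInf_le ⟨D, hDadm, rfl⟩
    omega
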